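/- arXiv:2305.01606 — 3 statements merged into one kernel-verified Lean document; each statement's English description precedes it below -/
import Mathlib

section
/- A Pfister form over a field of characteristic ≠ 2 is hyperbolic if and only if it is isotropic. -/
/-
STATEMENT 5: A Pfister form over a field of characteristic ≠ 2 is hyperbolic if
and only if it is isotropic.  Here the n-fold Pfister form ⟨⟨a₁,…,aₙ⟩⟩ is
realized as the diagonal form with coefficients ∏_{i ∈ S} (-aᵢ), S ⊆ {1,…,n}.
-/

noncomputable section

/-- The `n`-fold Pfister form `⟨1,-a₁⟩ ⊗ ⋯ ⊗ ⟨1,-aₙ⟩`, written as a diagonal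
quadratic form indexed by subsets of `Fin n`. -/
def pfisterForm (K : Type) [Field K] {n : ℕ} (a : Fin n → Kˣ) :
    QuadraticForm K (Finset (Fin n) → K) :=
  QuadraticMap.weightedSumSquares K (fun S : Finset (Fin n) => ∏ i ∈ S, (-(a i : K)))

/-- A quadratic form is hyperbolic if it is equivalent to an orthogonal sum of
hyperbolic planes, i.e. to the diagonal form ⟨1,…,1,-1,…,-1⟩ of some even rank. -/
def QuadraticForm.IsHyperbolic {K M : Type} [Field K] [AddCommGroup M] [Module K M]
    (q : QuadraticForm K M) : Prop :=
  ∃ m : ℕ, QuadraticMap.Equivalent q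
    (QuadraticMap.weightedSumSquares K
      (Sum.elim (fun _ : Fin m => (1 : K)) (fun _ : Fin m => (-1 : K))))

/-- A quadratic form is isotropic if it has a nontrivial zero. -/
def QuadraticForm.IsIsotropic {K M : Type} [Field K] [AddCommGroup M] [Module K M]
    (q : QuadraticForm K M) : Prop :=
  ∃ v : M, v ≠ 0 ∧ q v = 0

set_option maxHeartbeats 1000000

namespace PF

open QuadraticMap

variable {K : Type} [Field K]

/-- Equivalence of diagonal quadratic forms given by weight functions. -/
def Eqv {ι ι' : Type} [Fintype ι] [Fintype ι'] (w : ι → K) (w' : ι' → K) : Prop :=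
  QuadraticMap.Equivalent (weightedSumSquares K w) (weightedSumSquares K w')

theorem mk' {ι ι' : Type} [Fintype ι] [Fintype ι'] {w : ι → K} {w' : ι' → K}
    (f : (ι → K) ≃ₗ[K] (ι' → K))
    (h : ∀ v, ∑ i', w' i' * (f v i' * f v i') = ∑ i, w i * (v i * v i)) :
    Eqv w w' := by
  refine ⟨⟨f, fun v => ?_⟩⟩
  change weightedSumSquares K w' (f v) = weightedSumSquares K w v
  simp only [weightedSumSquares_apply, smul_eq_mul]
  exact h v

theorem Eqv.refl {ι : Type} [Fintype ι] (w : ι → K) : Eqv w w :=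
  QuadraticMap.Equivalent.refl _

theorem Eqv.symm {ι ι' : Type} [Fintype ι] [Fintype ι'] {w : ι → K} {w' : ι' → K}
    (h : Eqv w w') : Eqv w' w := QuadraticMap.Equivalent.symm h

theorem Eqv.trans {ι ι' ι'' : Type} [Fintype ι] [Fintype ι'] [Fintype ι'']
    {w : ι → K} {w' : ι' → K} {w'' : ι'' → K}
    (h : Eqv w w') (h' : Eqv w' w'') : Eqv w w'' := QuadraticMap.Equivalent.trans h h'

theorem eqv_of_eq {ι : Type} [Fintype ι] {w w' : ι → K} (h : w = w') : Eqv w w' := by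
  subst h; exact Eqv.refl w

theorem reindex {ι ι' : Type} [Fintype ι] [Fintype ι'] {w : ι → K} {w' : ι' → K}
    (e : ι ≃ ι') (h : ∀ i, w' (e i) = w i) : Eqv w w' := by
  refine mk' (LinearEquiv.funCongrLeft K K e.symm) fun v => ?_
  refine (Fintype.sum_equiv e _ _ fun i => ?_).symm
  simp [LinearEquiv.funCongrLeft_apply, h i]

theorem scale {ι ι' : Type} [Fintype ι] [Fintype ι'] {w : ι → K} {w' : ι' → K}
    (c : K) (h : Eqv w w') : Eqv (fun i => c * w i) (fun i => c * w' i) := by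
  obtain ⟨f⟩ := h
  refine ⟨⟨f.toLinearEquiv, fun v => ?_⟩⟩
  change weightedSumSquares K _ (f v) = weightedSumSquares K _ v
  have hf := f.map_app v
  simp only [weightedSumSquares_apply, smul_eq_mul] at hf ⊢
  calc ∑ i', c * w' i' * (f v i' * f v i')
      = c * ∑ i', w' i' * (f v i' * f v i') := by
        rw [Finset.mul_sum]; exact Finset.sum_congr rfl fun i _ => by ring
    _ = c * ∑ i, w i * (v i * v i) := by rw [hf]
    _ = _ := by rw [Finset.mul_sum]; exact Finset.sum_congr rfl fun i _ => by ring

theorem squareScale {ι : Type} [Fintype ι] {w : ι → K} (u : ι → K) (hu : ∀ i, u i ≠ 0) :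
    Eqv (fun i => u i ^ 2 * w i) w := by
  refine mk' (LinearEquiv.piCongrRight fun i =>
    LinearEquiv.smulOfNeZero K K (u i) (hu i)) fun v => ?_
  refine Finset.sum_congr rfl fun i _ => ?_
  simp only [LinearEquiv.piCongrRight_apply, LinearEquiv.smulOfNeZero, LinearEquiv.smulOfUnit,
    DistribMulAction.toLinearEquiv, Units.smul_mk0, LinearEquiv.coe_mk]
  show w i * (u i • v i * (u i • v i)) = u i ^ 2 * w i * (v i * v i)
  simp only [smul_eq_mul]; ring

theorem sum_congr {ι₁ ι₁' ι₂ ι₂' : Type} [Fintype ι₁] [Fintype ι₁'] [Fintype ι₂] [Fintype ι₂']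
    {w₁ : ι₁ → K} {w₁' : ι₁' → K} {w₂ : ι₂ → K} {w₂' : ι₂' → K}
    (h₁ : Eqv w₁ w₂) (h₂ : Eqv w₁' w₂') :
    Eqv (Sum.elim w₁ w₁') (Sum.elim w₂ w₂') := by
  obtain ⟨f₁⟩ := h₁
  obtain ⟨f₂⟩ := h₂
  refine mk' (K := K) {
      toFun := fun v => Sum.elim (f₁ (v ∘ Sum.inl)) (f₂ (v ∘ Sum.inr))
      invFun := fun v => Sum.elim (f₁.toLinearEquiv.symm (v ∘ Sum.inl))
        (f₂.toLinearEquiv.symm (v ∘ Sum.inr))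
      map_add' := fun v v' => by
        funext z
        cases z with
        | inl i =>
            show f₁ ((v + v') ∘ Sum.inl) i = f₁ (v ∘ Sum.inl) i + f₁ (v' ∘ Sum.inl) i
            rw [show (v + v') ∘ Sum.inl = v ∘ Sum.inl + v' ∘ Sum.inl from rfl, map_add]
            rfl
        | inr i =>
            show f₂ ((v + v') ∘ Sum.inr) i = f₂ (v ∘ Sum.inr) i + f₂ (v' ∘ Sum.inr) i
            rw [show (v + v') ∘ Sum.inr = v ∘ Sum.inr + v' ∘ Sum.inr from rfl, map_add]
            rfl
      map_smul' := fun c v => by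
        funext z
        cases z with
        | inl i =>
            show f₁ ((c • v) ∘ Sum.inl) i = c • f₁ (v ∘ Sum.inl) i
            rw [show (c • v) ∘ Sum.inl = c • (v ∘ Sum.inl) from rfl, _root_.map_smul]
            rfl
        | inr i =>
            show f₂ ((c • v) ∘ Sum.inr) i = c • f₂ (v ∘ Sum.inr) i
            rw [show (c • v) ∘ Sum.inr = c • (v ∘ Sum.inr) from rfl, _root_.map_smul]
            rfl
      left_inv := fun v => by
        funext z
        cases z with
        | inl i =>
            show f₁.toLinearEquiv.symm (f₁ (v ∘ Sum.inl)) i = v (Sum.inl i)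
            rw [show (f₁ (v ∘ Sum.inl) : ι₂ → K) = f₁.toLinearEquiv (v ∘ Sum.inl) from rfl,
              LinearEquiv.symm_apply_apply]
            rfl
        | inr i =>
            show f₂.toLinearEquiv.symm (f₂ (v ∘ Sum.inr)) i = v (Sum.inr i)
            rw [show (f₂ (v ∘ Sum.inr) : ι₂' → K) = f₂.toLinearEquiv (v ∘ Sum.inr) from rfl,
              LinearEquiv.symm_apply_apply]
            rfl
      right_inv := fun v => by
        funext z
        cases z with
        | inl i =>
            show f₁ (f₁.toLinearEquiv.symm (v ∘ Sum.inl)) i = v (Sum.inl i)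
            rw [show (f₁ (f₁.toLinearEquiv.symm (v ∘ Sum.inl)) : ι₂ → K)
                = f₁.toLinearEquiv (f₁.toLinearEquiv.symm (v ∘ Sum.inl)) from rfl,
              LinearEquiv.apply_symm_apply]
            rfl
        | inr i =>
            show f₂ (f₂.toLinearEquiv.symm (v ∘ Sum.inr)) i = v (Sum.inr i)
            rw [show (f₂ (f₂.toLinearEquiv.symm (v ∘ Sum.inr)) : ι₂' → K)
                = f₂.toLinearEquiv (f₂.toLinearEquiv.symm (v ∘ Sum.inr)) from rfl,
              LinearEquiv.apply_symm_apply]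
            rfl } fun v => ?_
  have e₁ := f₁.map_app (v ∘ Sum.inl)
  have e₂ := f₂.map_app (v ∘ Sum.inr)
  simp only [weightedSumSquares_apply, smul_eq_mul] at e₁ e₂
  rw [Fintype.sum_sum_type, Fintype.sum_sum_type]
  simp only [LinearEquiv.coe_mk, LinearMap.coe_mk, AddHom.coe_mk, Sum.elim_inl, Sum.elim_inr]
  rw [e₁, e₂]
  rfl

/-- The binary diagonal form with entries `b, c`, indexed by `Fin 1 ⊕ Fin 1`. -/
def e2 (b c : K) : Fin 1 ⊕ Fin 1 → K := Sum.elim (fun _ => b) (fun _ => c)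

/-- The linear map on `K²` with matrix `[[p, q], [r, s]]`. -/
def lin2 (p q r s : K) : ((Fin 1 ⊕ Fin 1) → K) →ₗ[K] ((Fin 1 ⊕ Fin 1) → K) where
  toFun v := Sum.elim (fun _ => p * v (Sum.inl 0) + q * v (Sum.inr 0))
                      (fun _ => r * v (Sum.inl 0) + s * v (Sum.inr 0))
  map_add' v v' := by
    funext z; cases z <;> simp only [Sum.elim_inl, Sum.elim_inr, Pi.add_apply] <;> ring
  map_smul' t v := by
    funext z; cases z <;>
      simp only [Sum.elim_inl, Sum.elim_inr, Pi.smul_apply, smul_eq_mul, RingHom.id_apply] <;> ring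

/-- A nonzero value `d` represented by the binary form `⟨b, c⟩` can be moved into the first
diagonal slot: `⟨b, c⟩ ≃ ⟨d, bcd⟩`. -/
theorem binary (b c d x y : K) (hd : b * x ^ 2 + c * y ^ 2 = d) (hd0 : d ≠ 0) :
    Eqv (e2 d (b * c * d)) (e2 b c) := by
  subst hd
  set d := b * x ^ 2 + c * y ^ 2 with hdef
  refine mk' (LinearEquiv.ofLinear (lin2 x (-(c * y)) y (b * x))
    (lin2 (b * x / d) (c * y / d) (-y / d) (x / d)) ?_ ?_) fun v => ?_
  · apply LinearMap.ext; intro v; funext z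
    rcases z with k | k <;>
      (obtain rfl : k = 0 := Subsingleton.elim k 0
       simp only [lin2, LinearMap.comp_apply, LinearMap.coe_mk, AddHom.coe_mk,
        Sum.elim_inl, Sum.elim_inr, LinearMap.id_apply]
       field_simp
       ring)
  · apply LinearMap.ext; intro v; funext z
    rcases z with k | k <;>
      (obtain rfl : k = 0 := Subsingleton.elim k 0
       simp only [lin2, LinearMap.comp_apply, LinearMap.coe_mk, AddHom.coe_mk,
        Sum.elim_inl, Sum.elim_inr, LinearMap.id_apply]
       field_simp
       ring)
  · rw [Fintype.sum_sum_type, Fintype.sum_sum_type]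
    simp only [LinearEquiv.ofLinear_apply, lin2, LinearMap.coe_mk, AddHom.coe_mk,
      Fin.sum_univ_one, e2, Sum.elim_inl, Sum.elim_inr]
    ring

/-- Tensoring an equivalence (on the left factor) with a fixed diagonal form. -/
theorem tensorL {κ κ' ι : Type} [Fintype κ] [Fintype κ'] [Fintype ι]
    {u : κ → K} {u' : κ' → K} (w : ι → K) (h : Eqv u u') :
    Eqv (fun p : κ × ι => u p.1 * w p.2) (fun p : κ' × ι => u' p.1 * w p.2) := by
  obtain ⟨f⟩ := h
  refine mk' {
      toFun := fun g p => f (fun k => g (k, p.2)) p.1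
      invFun := fun g p => f.toLinearEquiv.symm (fun k => g (k, p.2)) p.1
      map_add' := fun g g' => by
        funext p
        show f (fun k => (g + g') (k, p.2)) p.1 = _
        rw [show (fun k => (g + g') (k, p.2))
            = (fun k => g (k, p.2)) + fun k => g' (k, p.2) from rfl, map_add]
        rfl
      map_smul' := fun t g => by
        funext p
        show f (fun k => (t • g) (k, p.2)) p.1 = _
        rw [show (fun k => (t • g) (k, p.2)) = t • fun k => g (k, p.2) from rfl, _root_.map_smul]
        rfl
      left_inv := fun g => by
        funext p
        show f.toLinearEquiv.symm (fun k => f (fun k' => g (k', p.2)) k) p.1 = _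
        rw [show (fun k => f (fun k' => g (k', p.2)) k)
            = f.toLinearEquiv (fun k' => g (k', p.2)) from rfl, LinearEquiv.symm_apply_apply]
      right_inv := fun g => by
        funext p
        show f (f.toLinearEquiv.symm fun k => g (k, p.2)) p.1 = _
        rw [show (f (f.toLinearEquiv.symm fun k => g (k, p.2)) : κ' → K)
            = f.toLinearEquiv (f.toLinearEquiv.symm fun k => g (k, p.2)) from rfl,
          LinearEquiv.apply_symm_apply] } fun g => ?_
  rw [Fintype.sum_prod_type_right, Fintype.sum_prod_type_right]
  refine Finset.sum_congr rfl fun i _ => ?_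
  simp only [LinearEquiv.coe_mk]
  have hf := f.map_app fun k => g (k, i)
  simp only [weightedSumSquares_apply, smul_eq_mul] at hf
  calc ∑ k', u' k' * w i * (f (fun k => g (k, i)) k' * f (fun k => g (k, i)) k')
      = w i * ∑ k', u' k' * (f (fun k => g (k, i)) k' * f (fun k => g (k, i)) k') := by
        rw [Finset.mul_sum]; exact Finset.sum_congr rfl fun k _ => by ring
    _ = w i * ∑ k, u k * (g (k, i) * g (k, i)) := by rw [hf]
    _ = _ := by rw [Finset.mul_sum]; exact Finset.sum_congr rfl fun k _ => by ring

theorem pair_tensor {ι : Type} [Fintype ι] (b c : K) (w : ι → K) :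
    Eqv (fun p : (Fin 1 ⊕ Fin 1) × ι => e2 b c p.1 * w p.2)
      (Sum.elim (fun i => b * w i) (fun i => c * w i)) := by
  refine reindex ((Equiv.sumProdDistrib _ _ _).trans
    (Equiv.sumCongr (Equiv.uniqueProd ι (Fin 1)) (Equiv.uniqueProd ι (Fin 1)))) fun p => ?_
  rcases p with ⟨k | k, i⟩ <;>
    simp [e2, Equiv.sumProdDistrib, Equiv.uniqueProd]

/-- Congruence of two-term scaled sums: a binary equivalence can be tensored with `w`. -/
theorem sum_scale_congr {ι : Type} [Fintype ι] {b₁ b₂ b₁' b₂' : K} (w : ι → K)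
    (h : Eqv (e2 b₁ b₂) (e2 b₁' b₂')) :
    Eqv (Sum.elim (fun i => b₁ * w i) (fun i => b₂ * w i))
      (Sum.elim (fun i => b₁' * w i) (fun i => b₂' * w i)) :=
  ((pair_tensor b₁ b₂ w).symm.trans (tensorL w h)).trans (pair_tensor b₁' b₂' w)

/-- The split hyperbolic form of rank `2m`. -/
def hypW (m : ℕ) : Fin m ⊕ Fin m → K := Sum.elim (fun _ => 1) (fun _ => -1)

/-- A diagonal form is hyperbolic if it is equivalent to some `hypW m`. -/
def Hyp {ι : Type} [Fintype ι] (w : ι → K) : Prop := ∃ m : ℕ, Eqv w (hypW m)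

theorem Hyp.of_eqv {ι ι' : Type} [Fintype ι] [Fintype ι'] {w : ι → K} {w' : ι' → K}
    (e : Eqv w w') (h : Hyp w') : Hyp w := by
  obtain ⟨m, hm⟩ := h; exact ⟨m, e.trans hm⟩

theorem hyp_sum {ι ι' : Type} [Fintype ι] [Fintype ι'] {w : ι → K} {w' : ι' → K}
    (h : Hyp w) (h' : Hyp w') : Hyp (Sum.elim w w') := by
  obtain ⟨m, hm⟩ := h
  obtain ⟨m', hm'⟩ := h'
  refine ⟨m + m', (sum_congr hm hm').trans (reindex
    ((Equiv.sumSumSumComm (Fin m) (Fin m) (Fin m') (Fin m')).trans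
      (Equiv.sumCongr finSumFinEquiv finSumFinEquiv)) fun z => ?_)⟩
  rcases z with (i | i) | (i | i) <;>
    simp [hypW, Equiv.sumSumSumComm]

theorem pair_hyp (h2 : (2 : K) ≠ 0) {c : K} (hc : c ≠ 0) : Eqv (e2 c (-c)) (hypW 1) := by
  have hxy : c * ((c⁻¹ + 1) / 2) ^ 2 + (-c) * ((c⁻¹ - 1) / 2) ^ 2 = 1 := by
    field_simp
    ring
  have hb := (binary c (-c) 1 _ _ hxy one_ne_zero).symm
  refine hb.trans ?_
  have he : e2 1 (c * -c * 1) = fun z => (Sum.elim (fun _ => 1) (fun _ => c) z) ^ 2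
      * hypW 1 z := by
    funext z; rcases z with k | k <;> simp [e2, hypW] <;> ring
  refine (eqv_of_eq he).trans (squareScale _ fun z => ?_)
  rcases z with k | k <;> simp [hc]

theorem hyp_neg_sum_fin (h2 : (2 : K) ≠ 0) :
    ∀ (m : ℕ) (w : Fin m → K), (∀ i, w i ≠ 0) → Hyp (Sum.elim w fun i => -w i) := by
  intro m
  induction m with
  | zero =>
      intro w hw
      exact ⟨0, reindex (Equiv.refl _) fun z => by rcases z with i | i <;> exact i.elim0⟩
  | succ m IH =>
      intro w hw
      set w₀ : Fin m → K := fun i => w (finSumFinEquiv (Sum.inl i)) with hw₀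
      set cN : K := w (finSumFinEquiv (Sum.inr 0)) with hcN
      have hre : Eqv (Sum.elim (Sum.elim w₀ fun i => -w₀ i) (e2 cN (-cN)))
          (Sum.elim w fun i => -w i) := by
        refine reindex ((Equiv.sumSumSumComm (Fin m) (Fin m) (Fin 1) (Fin 1)).trans
          (Equiv.sumCongr finSumFinEquiv finSumFinEquiv)) fun z => ?_
        rcases z with (i | i) | (k | k)
        · simp [Equiv.sumSumSumComm, e2, hw₀]
        · simp [Equiv.sumSumSumComm, e2, hw₀]
        · obtain rfl : k = 0 := Subsingleton.elim k 0
          simp [Equiv.sumSumSumComm, e2, hcN]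
        · obtain rfl : k = 0 := Subsingleton.elim k 0
          simp [Equiv.sumSumSumComm, e2, hcN]
      refine Hyp.of_eqv hre.symm (hyp_sum (IH w₀ fun i => hw _) ⟨1, pair_hyp h2 ?_⟩)
      exact hw _

theorem hyp_neg_sum {ι : Type} [Fintype ι] (h2 : (2 : K) ≠ 0) (w : ι → K)
    (hw : ∀ i, w i ≠ 0) : Hyp (Sum.elim w fun i => -w i) := by
  classical
  obtain ⟨eF⟩ : Nonempty (ι ≃ Fin (Fintype.card ι)) := ⟨Fintype.equivFin ι⟩
  have hre : Eqv (Sum.elim w fun i => -w i)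
      (Sum.elim (fun j => w (eF.symm j)) fun j => -w (eF.symm j)) := by
    refine reindex (Equiv.sumCongr eF eF) fun z => ?_
    rcases z with i | i <;> simp
  exact Hyp.of_eqv hre (hyp_neg_sum_fin h2 _ _ fun j => hw _)

theorem hyp_scale {ι : Type} [Fintype ι] (h2 : (2 : K) ≠ 0) {w : ι → K} {c : K} (hc : c ≠ 0)
    (h : Hyp w) : Hyp fun i => c * w i := by
  obtain ⟨m, hm⟩ := h
  have h1 : Eqv (fun i => c * w i) (fun z => c * hypW m z) := scale c hm
  have h2' : (fun z : Fin m ⊕ Fin m => c * hypW m z)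
      = Sum.elim (fun _ : Fin m => c) fun _ : Fin m => -c := by
    funext z; rcases z with i | i <;> simp [hypW]
  refine Hyp.of_eqv (h1.trans (eqv_of_eq h2')) ?_
  have := hyp_neg_sum h2 (fun _ : Fin m => c) fun _ => hc
  simpa using this

/-! ### Value and transfer lemmas -/

theorem wss_sum_elim {ι ι' : Type} [Fintype ι] [Fintype ι'] (w₁ : ι → K) (w₂ : ι' → K)
    (v : ι ⊕ ι' → K) :
    weightedSumSquares K (Sum.elim w₁ w₂) v
      = weightedSumSquares K w₁ (v ∘ Sum.inl) + weightedSumSquares K w₂ (v ∘ Sum.inr) := by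
  simp only [weightedSumSquares_apply, smul_eq_mul]
  rw [Fintype.sum_sum_type]
  rfl

theorem wss_scale {ι : Type} [Fintype ι] (c : K) (w : ι → K) (v : ι → K) :
    weightedSumSquares K (fun i => c * w i) v = c * weightedSumSquares K w v := by
  simp only [weightedSumSquares_apply, smul_eq_mul]
  rw [Finset.mul_sum]
  exact Finset.sum_congr rfl fun i _ => by ring

theorem Eqv.rep {ι ι' : Type} [Fintype ι] [Fintype ι'] {w : ι → K} {w' : ι' → K}
    (h : Eqv w w') {c : K} (hr : ∃ v, weightedSumSquares K w v = c) :
    ∃ v', weightedSumSquares K w' v' = c := by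
  obtain ⟨f⟩ := h
  obtain ⟨v, hv⟩ := hr
  exact ⟨f v, by rw [f.map_app, hv]⟩

theorem Eqv.isotropic {ι ι' : Type} [Fintype ι] [Fintype ι'] {w : ι → K} {w' : ι' → K}
    (h : Eqv w w') (hr : ∃ v, v ≠ 0 ∧ weightedSumSquares K w v = 0) :
    ∃ v', v' ≠ 0 ∧ weightedSumSquares K w' v' = 0 := by
  obtain ⟨f⟩ := h
  obtain ⟨v, hv0, hv⟩ := hr
  refine ⟨f v, fun hz => hv0 ?_, by rw [f.map_app, hv]⟩
  have : f.toLinearEquiv v = 0 := hz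
  simpa using congrArg f.toLinearEquiv.symm this

/-! ### The Pfister weights -/

/-- The weights of the `n`-fold Pfister form. -/
def pfW {n : ℕ} (a : Fin n → Kˣ) : Finset (Fin n) → K := fun S => ∏ i ∈ S, (-(a i : K))

theorem pfW_ne_zero {n : ℕ} (a : Fin n → Kˣ) (S : Finset (Fin n)) : pfW a S ≠ 0 := by
  rw [pfW, Finset.prod_ne_zero_iff]
  intro i _
  simpa using (a i).ne_zero

/-- Splitting subsets of `Fin (n+1)` according to whether they contain `Fin.last n`. -/
def splitEquiv (n : ℕ) : Finset (Fin n) ⊕ Finset (Fin n) ≃ Finset (Fin (n + 1)) where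
  toFun z := Sum.elim (fun S => S.map Fin.castSuccEmb)
    (fun S => insert (Fin.last n) (S.map Fin.castSuccEmb)) z
  invFun T := if Fin.last n ∈ T
    then Sum.inr (T.preimage Fin.castSucc (Fin.castSucc_injective n).injOn)
    else Sum.inl (T.preimage Fin.castSucc (Fin.castSucc_injective n).injOn)
  left_inv z := by
    have hlast : ∀ S : Finset (Fin n), Fin.last n ∉ S.map Fin.castSuccEmb := by
      intro S hmem
      rw [Finset.mem_map] at hmem
      obtain ⟨i, _, hi⟩ := hmem
      exact absurd hi (by simpa using (Fin.castSucc_lt_last i).ne)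
    have hpre : ∀ S : Finset (Fin n),
        (S.map Fin.castSuccEmb).preimage Fin.castSucc (Fin.castSucc_injective n).injOn = S := by
      intro S
      ext i
      rw [Finset.mem_preimage, Finset.mem_map]
      constructor
      · rintro ⟨a, ha, hai⟩
        have hai' : a = i := Fin.castSucc_injective n hai
        rwa [hai'] at ha
      · intro hi
        exact ⟨i, hi, rfl⟩
    rcases z with S | S
    · simp only [Sum.elim_inl]
      simp only [hlast S, ↓reduceIte, hpre S]
    · simp only [Sum.elim_inr]
      simp only [Finset.mem_insert_self, ↓reduceIte]
      congr 1
      ext i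
      rw [Finset.mem_preimage, Finset.mem_insert, Finset.mem_map]
      constructor
      · rintro (h | ⟨a, ha, hai⟩)
        · exact absurd h (by simpa using (Fin.castSucc_lt_last i).ne)
        · have hai' : a = i := Fin.castSucc_injective n hai
          rwa [hai'] at ha
      · intro hi
        exact Or.inr ⟨i, hi, rfl⟩
  right_inv T := by
    dsimp only
    by_cases hl : Fin.last n ∈ T
    · rw [if_pos hl, Sum.elim_inr]
      ext j
      rw [Finset.mem_insert, Finset.mem_map]
      constructor
      · rintro (rfl | ⟨i, hi, rfl⟩)
        · exact hl
        · exact (Finset.mem_preimage).mp hi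
      · intro hj
        by_cases hjl : j = Fin.last n
        · exact Or.inl hjl
        · obtain ⟨i, rfl⟩ := Fin.exists_castSucc_eq.mpr hjl
          exact Or.inr ⟨i, (Finset.mem_preimage).mpr hj, rfl⟩
    · rw [if_neg hl, Sum.elim_inl]
      ext j
      rw [Finset.mem_map]
      constructor
      · rintro ⟨i, hi, rfl⟩
        exact (Finset.mem_preimage).mp hi
      · intro hj
        have hjl : j ≠ Fin.last n := fun h => hl (h ▸ hj)
        obtain ⟨i, rfl⟩ := Fin.exists_castSucc_eq.mpr hjl
        exact ⟨i, (Finset.mem_preimage).mpr hj, rfl⟩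

theorem pfW_split {n : ℕ} (a : Fin (n + 1) → Kˣ) (z : Finset (Fin n) ⊕ Finset (Fin n)) :
    pfW a (splitEquiv n z)
      = Sum.elim (pfW fun i => a (Fin.castSucc i))
          (fun S => -(a (Fin.last n) : K) * pfW (fun i => a (Fin.castSucc i)) S) z := by
  have hlast : ∀ S : Finset (Fin n), Fin.last n ∉ S.map Fin.castSuccEmb := by
    intro S hmem
    rw [Finset.mem_map] at hmem
    obtain ⟨i, _, hi⟩ := hmem
    exact absurd hi (by simpa using (Fin.castSucc_lt_last i).ne)
  rcases z with S | S
  · show pfW a (S.map Fin.castSuccEmb) = _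
    rw [pfW, Finset.prod_map]
    rfl
  · show pfW a (insert (Fin.last n) (S.map Fin.castSuccEmb)) = _
    rw [pfW, Finset.prod_insert (hlast S), Finset.prod_map]
    rfl

/-! ### The main induction: Pfister forms are round, and hyperbolic when isotropic -/

theorem pf_main (h2 : (2 : K) ≠ 0) : ∀ (n : ℕ) (a : Fin n → Kˣ),
    (∀ c : K, c ≠ 0 → (∃ v, weightedSumSquares K (pfW a) v = c) →
      Eqv (fun S => c * pfW a S) (pfW a)) ∧
    ((∃ v, v ≠ 0 ∧ weightedSumSquares K (pfW a) v = 0) → Hyp (pfW a)) := by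
  intro n
  induction n with
  | zero =>
      intro a
      haveI : Unique (Finset (Fin 0)) :=
        ⟨⟨∅⟩, fun S => Finset.eq_empty_of_isEmpty S⟩
      have hpf : ∀ S : Finset (Fin 0), pfW a S = 1 := by
        intro S
        rw [Finset.eq_empty_of_isEmpty S, pfW, Finset.prod_empty]
      have hval : ∀ v : Finset (Fin 0) → K,
          weightedSumSquares K (pfW a) v = v default * v default := by
        intro v
        rw [weightedSumSquares_apply, Fintype.sum_unique, hpf, one_smul]
        exact congrArg₂ (fun p q => p * q) (congrArg v (Subsingleton.elim _ _))
          (congrArg v (Subsingleton.elim _ _))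
      constructor
      · intro c hc ⟨v, hv⟩
        rw [hval v] at hv
        have hvd : v default ≠ 0 := fun h => hc (by rw [← hv, h, mul_zero])
        have heq : (fun S => c * pfW a S) = fun S => (v default) ^ 2 * pfW a S := by
          funext S
          rw [← hv]; ring
        exact (eqv_of_eq heq).trans (squareScale _ fun _ => hvd)
      · rintro ⟨v, hv0, hv⟩
        rw [hval v] at hv
        have : v default = 0 := by
          rcases mul_self_eq_zero.mp hv with h
          exact h
        exact absurd (funext fun S => by rw [Subsingleton.elim S default]; exact this) hv0
  | succ n IH =>
      intro a
      obtain ⟨round₀, main₀⟩ := IH fun i => a (Fin.castSucc i)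
      set w₀ : Finset (Fin n) → K := pfW fun i => a (Fin.castSucc i) with hw₀def
      set aN : K := (a (Fin.last n) : K) with haNdef
      have haN : aN ≠ 0 := Units.ne_zero _
      have hw₀ : ∀ S, w₀ S ≠ 0 := pfW_ne_zero _
      have hsplit : Eqv (Sum.elim w₀ fun S => -aN * w₀ S) (pfW a) :=
        reindex (splitEquiv n) (pfW_split a)
      constructor
      · -- roundness
        intro c hc hr
        obtain ⟨g, hg⟩ := Eqv.rep hsplit.symm hr
        rw [wss_sum_elim, wss_scale] at hg
        set x : K := weightedSumSquares K w₀ (g ∘ Sum.inl) with hx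
        set y : K := weightedSumSquares K w₀ (g ∘ Sum.inr) with hy
        have hstart : Eqv (fun S => c * pfW a S)
            (Sum.elim (fun S => c * w₀ S) fun S => c * (-aN * w₀ S)) := by
          refine (scale c hsplit.symm).trans (eqv_of_eq ?_)
          funext z; rcases z with S | S <;> rfl
        have hfin : Eqv (Sum.elim (fun S => c * w₀ S) fun S => c * (-aN * w₀ S))
            (Sum.elim w₀ fun S => -aN * w₀ S) := by
          by_cases hy0 : y = 0
          · have hxc : x = c := by rw [hy0, mul_zero, add_zero] at hg; exact hg
            have h1 : Eqv (fun S => c * w₀ S) w₀ := round₀ c hc ⟨g ∘ Sum.inl, hxc ▸ hx.symm⟩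
            refine sum_congr h1 ?_
            refine (eqv_of_eq (funext fun S => by ring)).trans (scale (-aN) h1)
          · by_cases hx0 : x = 0
            · have hcy : c = -aN * y := by rw [hx0, zero_add] at hg; exact hg.symm
              have hry : Eqv (fun S => y * w₀ S) w₀ := round₀ y hy0 ⟨g ∘ Sum.inr, rfl⟩
              have h1 : Eqv (fun S => c * w₀ S) (fun S => -aN * w₀ S) := by
                refine (eqv_of_eq (funext fun S => ?_)).trans (scale (-aN) hry)
                rw [hcy]; ring
              have h2 : Eqv (fun S => c * (-aN * w₀ S)) w₀ := by
                have hsq : Eqv (fun S => aN ^ 2 * (y * w₀ S)) (fun S => y * w₀ S) :=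
                  squareScale (fun _ => aN) fun _ => haN
                refine (eqv_of_eq (funext fun S => ?_)).trans (hsq.trans hry)
                rw [hcy]; ring
              refine (sum_congr h1 h2).trans (reindex (Equiv.sumComm _ _) fun z => ?_)
              rcases z with S | S <;> rfl
            · have hrx : Eqv (fun S => x * w₀ S) w₀ := round₀ x hx0 ⟨g ∘ Sum.inl, rfl⟩
              have hry : Eqv (fun S => y * w₀ S) w₀ := round₀ y hy0 ⟨g ∘ Sum.inr, rfl⟩
              have hxy : Eqv (fun S => x * y * w₀ S) w₀ := by
                refine ((eqv_of_eq (funext fun S => by ring)).trans (scale y hrx)).trans hry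
              have hd : x * (1 : K) ^ 2 + (-aN * y) * (1 : K) ^ 2 = c := by
                rw [← hg]; ring
              have hb := binary x (-aN * y) c 1 1 hd hc
              have step1 := sum_scale_congr w₀ hb
              have hAB : Eqv (fun S => c * (-aN * w₀ S))
                  (fun S => x * (-aN * y) * c * w₀ S) := by
                have := scale (c * -aN) hxy
                refine Eqv.symm ((eqv_of_eq (funext fun S => by ring)).trans
                  ((scale (c * -aN) hxy).trans (eqv_of_eq (funext fun S => by ring))))
              have step2 : Eqv (Sum.elim (fun S => x * w₀ S) fun S => -aN * y * w₀ S)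
                  (Sum.elim w₀ fun S => -aN * w₀ S) := by
                refine sum_congr hrx ?_
                exact (eqv_of_eq (funext fun S => by ring)).trans (scale (-aN) hry)
              exact ((sum_congr (Eqv.refl fun S => c * w₀ S) hAB).trans step1).trans step2
        exact (hstart.trans hfin).trans hsplit
      · -- isotropic implies hyperbolic
        rintro ⟨v, hv0, hv⟩
        obtain ⟨g, hg0, hg⟩ := Eqv.isotropic hsplit.symm ⟨v, hv0, hv⟩
        rw [wss_sum_elim, wss_scale] at hg
        set x : K := weightedSumSquares K w₀ (g ∘ Sum.inl) with hx
        set y : K := weightedSumSquares K w₀ (g ∘ Sum.inr) with hy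
        by_cases hiso : ∃ u, u ≠ 0 ∧ weightedSumSquares K w₀ u = 0
        · have h₀ := main₀ hiso
          have h₁ : Hyp fun S => -aN * w₀ S := hyp_scale h2 (neg_ne_zero.mpr haN) h₀
          exact Hyp.of_eqv hsplit.symm (hyp_sum h₀ h₁)
        · push_neg at hiso
          have aniso : ∀ u, weightedSumSquares K w₀ u = 0 → u = 0 := by
            intro u hu
            by_contra hu0
            exact hiso u hu0 hu
          have hgl : g ∘ Sum.inl ≠ 0 := by
            intro h
            have hx0 : x = 0 := by rw [hx, h, map_zero]
            have hy0 : y = 0 := by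
              rw [hx0, zero_add] at hg
              rcases mul_eq_zero.mp hg with h' | h'
              · exact absurd h' (neg_ne_zero.mpr haN)
              · exact h'
            have hgr : g ∘ Sum.inr = 0 := aniso _ (by rw [← hy]; exact hy0)
            apply hg0
            funext z
            rcases z with i | i
            · exact congrFun h i
            · exact congrFun hgr i
          have hx0 : x ≠ 0 := fun h => hgl (aniso _ (hx.symm.trans h))
          have hy0 : y ≠ 0 := by
            intro h
            apply hx0
            rw [h, mul_zero, add_zero] at hg
            exact hg
          have hxay : x = aN * y := by linear_combination hg
          have hrx : Eqv (fun S => x * w₀ S) w₀ := round₀ x hx0 ⟨g ∘ Sum.inl, rfl⟩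
          have hry : Eqv (fun S => y * w₀ S) w₀ := round₀ y hy0 ⟨g ∘ Sum.inr, rfl⟩
          have hinv : Eqv (fun S => y⁻¹ * w₀ S) w₀ := by
            have hsq : Eqv (fun S => (y⁻¹) ^ 2 * (y * w₀ S)) (fun S => y * w₀ S) :=
              squareScale (fun _ => y⁻¹) fun _ => inv_ne_zero hy0
            refine ((eqv_of_eq (funext fun S => ?_)).trans hsq).trans hry
            field_simp
          have key : Eqv (fun S => -aN * w₀ S) (fun S => -w₀ S) := by
            have haNx : -aN = -x * y⁻¹ := by
              field_simp [hxay]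
              linear_combination hxay
            have h1 : Eqv (fun S => -aN * w₀ S) (fun S => -x * w₀ S) := by
              refine (eqv_of_eq (funext fun S => ?_)).trans (scale (-x) hinv)
              rw [haNx]; ring
            refine h1.trans ?_
            refine ((eqv_of_eq (funext fun S => by ring)).trans (scale (-1) hrx)).trans
              (eqv_of_eq (funext fun S => by ring))
          have hfinal : Hyp (Sum.elim w₀ fun S => -aN * w₀ S) := by
            have e1 : Eqv (Sum.elim w₀ fun S => -aN * w₀ S)
                (Sum.elim w₀ fun S => -w₀ S) := sum_congr (Eqv.refl w₀) key
            exact Hyp.of_eqv e1 (hyp_neg_sum h2 w₀ hw₀)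
          exact Hyp.of_eqv hsplit.symm hfinal

end PF

theorem outer_forms_stmt5
    (K : Type) [Field K] (h2 : (2 : K) ≠ 0)
    (n : ℕ) (a : Fin n → Kˣ) :
    (pfisterForm K a).IsHyperbolic ↔ (pfisterForm K a).IsIsotropic := by
  open QuadraticMap in
  constructor
  · rintro ⟨m, hm⟩
    rcases m with _ | k
    · exfalso
      obtain ⟨f⟩ := hm
      haveI : Subsingleton (Fin 0 ⊕ Fin 0 → K) :=
        ⟨fun p q => funext fun z => by rcases z with i | i <;> exact i.elim0⟩
      have hv := f.toLinearEquiv.injective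
        (Subsingleton.elim (f.toLinearEquiv fun _ => (1 : K)) (f.toLinearEquiv 0))
      have h1 : (1 : K) = 0 := by
        have := congrFun hv ∅
        simpa using this
      exact one_ne_zero h1
    · obtain ⟨f⟩ := hm
      set g : Fin (k + 1) ⊕ Fin (k + 1) → K :=
        Sum.elim (fun i => if i = 0 then 1 else 0) (fun i => if i = 0 then 1 else 0) with hgdef
      have hgval : weightedSumSquares K
          (Sum.elim (fun _ : Fin (k + 1) => (1 : K)) fun _ : Fin (k + 1) => (-1 : K)) g = 0 := by
        rw [PF.wss_sum_elim]
        have h1 : weightedSumSquares K (fun _ : Fin (k + 1) => (1 : K)) (g ∘ Sum.inl) = 1 := by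
          rw [weightedSumSquares_apply]
          simp [hgdef, Function.comp, ite_mul, mul_ite]
        have hneg : weightedSumSquares K (fun _ : Fin (k + 1) => (-1 : K)) (g ∘ Sum.inr)
            = -1 := by
          rw [weightedSumSquares_apply]
          simp [hgdef, Function.comp, ite_mul, mul_ite]
        rw [h1, hneg]
        ring
      have hg0 : g ≠ 0 := by
        intro h
        have := congrFun h (Sum.inl 0)
        simp [hgdef] at this
      set v := f.toLinearEquiv.symm g with hvdef
      have hfv : f.toLinearEquiv v = g := f.toLinearEquiv.apply_symm_apply g
      refine ⟨v, fun h => hg0 (by rw [← hfv, h, map_zero]), ?_⟩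
      have happ := f.map_app v
      calc pfisterForm K a v = _ := (f.map_app v).symm
        _ = 0 := by
            rw [show (f v : Fin (k + 1) ⊕ Fin (k + 1) → K) = f.toLinearEquiv v from rfl, hfv]
            exact hgval
  · rintro ⟨v, hv0, hv⟩
    obtain ⟨m, hm⟩ := (PF.pf_main h2 n a).2 ⟨v, hv0, hv⟩
    exact ⟨m, hm⟩

end
end

section
/- Let A be a central simple algebra of degree n over a field F, and let L/F be a separable field extension of degree n. Then there exists an F-algebra embedding L ↪ A if and only if L splits A (i.e., A ⊗_F L is a matrix algebra over L). -/
/-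
STATEMENT 13: Let A be a central simple algebra of degree n over F and L/F a
separable field extension of degree n.  Then there is an F-algebra embedding
L ↪ A if and only if L splits A, i.e. A ⊗_F L ≅ M_n(L).
-/

open scoped TensorProduct

set_option linter.unusedSectionVars false

section Simple

variable (F L A : Type) [Field F] [Field L] [Algebra F L]
  [Ring A] [Algebra F A] [Algebra.IsCentral F A] [IsSimpleRing A]

local notation "ι" => Module.Basis.ofVectorSpaceIndex F L

noncomputable def Stmt13.cEquiv : L ⊗[F] A ≃ₗ[F] (ι →₀ A) :=
  letI := Classical.decEq ι
  (TensorProduct.congr (Module.Basis.ofVectorSpace F L).repr (LinearEquiv.refl F A)).trans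
    (TensorProduct.finsuppScalarLeft F A ι)

lemma Stmt13.Stmt13.cEquiv_tmul (l : L) (a : A) (i : ι) :
    Stmt13.cEquiv F L A (l ⊗ₜ a) i = (Module.Basis.ofVectorSpace F L).repr l i • a := by
  simp [Stmt13.cEquiv]

lemma Stmt13.Stmt13.cEquiv_mul_left (u : A) (z : L ⊗[F] A) (i : ι) :
    Stmt13.cEquiv F L A ((1 ⊗ₜ u) * z) i = u * Stmt13.cEquiv F L A z i := by
  induction z using TensorProduct.induction_on with
  | zero => simp
  | tmul l a =>
      rw [Algebra.TensorProduct.tmul_mul_tmul, one_mul, Stmt13.Stmt13.cEquiv_tmul, Stmt13.Stmt13.cEquiv_tmul,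
        mul_smul_comm]
  | add x y hx hy => rw [mul_add, map_add, map_add, Finsupp.add_apply, Finsupp.add_apply,
      hx, hy, mul_add]

lemma Stmt13.Stmt13.cEquiv_mul_right (v : A) (z : L ⊗[F] A) (i : ι) :
    Stmt13.cEquiv F L A (z * (1 ⊗ₜ v)) i = Stmt13.cEquiv F L A z i * v := by
  induction z using TensorProduct.induction_on with
  | zero => simp
  | tmul l a =>
      rw [Algebra.TensorProduct.tmul_mul_tmul, mul_one, Stmt13.Stmt13.cEquiv_tmul, Stmt13.Stmt13.cEquiv_tmul,
        smul_mul_assoc]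
  | add x y hx hy => rw [add_mul, map_add, map_add, Finsupp.add_apply, Finsupp.add_apply,
      hx, hy, add_mul]

lemma Stmt13.Stmt13.cEquiv_reconstruct (z : L ⊗[F] A) :
    z = (Stmt13.cEquiv F L A z).sum fun i a => (Module.Basis.ofVectorSpace F L) i ⊗ₜ[F] a := by
  apply (Stmt13.cEquiv F L A).injective
  rw [map_finsuppSum]
  have h1 : ∀ (i : ι) (a : A), Stmt13.cEquiv F L A ((Module.Basis.ofVectorSpace F L) i ⊗ₜ[F] a)
      = Finsupp.single i a := by
    intro i a
    ext j
    rw [Stmt13.Stmt13.cEquiv_tmul, Module.Basis.repr_self]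
    by_cases h : j = i
    · subst h; simp
    · simp [Finsupp.single_apply, Ne.symm h, h]
  have h2 : ((Stmt13.cEquiv F L A z).sum fun i a => Stmt13.cEquiv F L A ((Module.Basis.ofVectorSpace F L) i ⊗ₜ[F] a))
      = (Stmt13.cEquiv F L A z).sum fun i a => Finsupp.single i a :=
    Finsupp.sum_congr fun i _ => h1 i _
  rw [h2, Finsupp.sum_single]

theorem Stmt13.tensor_isSimpleRing : IsSimpleRing (L ⊗[F] A) := by
  classical
  have hnt : Nontrivial (L ⊗[F] A) := by
    have : Nonempty ι := (Module.Basis.ofVectorSpace F L).index_nonempty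
    exact Equiv.nontrivial (Stmt13.cEquiv F L A).toEquiv
  refine IsSimpleRing.of_eq_bot_or_eq_top fun I => ?_
  rw [or_iff_not_imp_left]
  intro hbot
  set c := Stmt13.cEquiv F L A with hc
  -- a nonzero element exists
  have hex : ∃ k, ∃ z, z ∈ I ∧ z ≠ 0 ∧ (c z).support.card = k := by
    obtain ⟨z, hzI, hz0⟩ : ∃ z, z ∈ I ∧ z ≠ 0 := by
      by_contra h
      push_neg at h
      exact hbot (by ext x; simp [TwoSidedIdeal.mem_bot]; exact ⟨h x, by rintro rfl; exact I.zero_mem⟩)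
    exact ⟨_, z, hzI, hz0, rfl⟩
  obtain ⟨z, hzI, hz0, hzcard⟩ := Nat.find_spec hex
  have hmin : ∀ w, w ∈ I → w ≠ 0 → (c z).support.card ≤ (c w).support.card := by
    intro w hwI hw0
    rw [hzcard]
    exact Nat.find_min' hex ⟨w, hwI, hw0, rfl⟩
  have hcz : c z ≠ 0 := fun h => hz0 (by simpa using congrArg c.symm h)
  obtain ⟨i₀, hi₀⟩ := Finsupp.support_nonempty_iff.2 hcz
  -- the ideal of "leading coefficients"
  set J : TwoSidedIdeal A := TwoSidedIdeal.mk'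
    {t | ∃ w, w ∈ I ∧ (c w).support ⊆ (c z).support ∧ c w i₀ = t}
    ⟨0, I.zero_mem, by simp⟩
    (by rintro x y ⟨w, hw, hs, rfl⟩ ⟨w', hw', hs', rfl⟩
        refine ⟨w + w', I.add_mem hw hw', ?_, by rw [map_add]; rfl⟩
        rw [map_add]
        exact Finsupp.support_add.trans (Finset.union_subset hs hs'))
    (by rintro x ⟨w, hw, hs, rfl⟩
        exact ⟨-w, I.neg_mem hw, by rw [map_neg, Finsupp.support_neg]; exact hs,
          by rw [map_neg]; rfl⟩)
    (by rintro x y ⟨w, hw, hs, rfl⟩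
        refine ⟨(1 ⊗ₜ x) * w, I.mul_mem_left _ _ hw, ?_, by rw [hc] at *; rw [Stmt13.Stmt13.cEquiv_mul_left]⟩
        intro j hj
        apply hs
        simp only [Finsupp.mem_support_iff] at hj ⊢
        intro h0
        rw [hc] at *
        rw [Stmt13.Stmt13.cEquiv_mul_left, h0, mul_zero] at hj
        exact hj rfl)
    (by rintro x y ⟨w, hw, hs, rfl⟩
        refine ⟨w * (1 ⊗ₜ y), I.mul_mem_right _ _ hw, ?_, by rw [hc] at *; rw [Stmt13.Stmt13.cEquiv_mul_right]⟩
        intro j hj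
        apply hs
        simp only [Finsupp.mem_support_iff] at hj ⊢
        intro h0
        rw [hc] at *
        rw [Stmt13.Stmt13.cEquiv_mul_right, h0, zero_mul] at hj
        exact hj rfl)
  have ha₀ : c z i₀ ∈ J := by
    rw [TwoSidedIdeal.mem_mk']
    exact ⟨z, hzI, le_refl _, rfl⟩
  have h1J : (1 : A) ∈ J :=
    IsSimpleRing.one_mem_of_ne_zero_mem J (Finsupp.mem_support_iff.1 hi₀) ha₀
  rw [TwoSidedIdeal.mem_mk'] at h1J
  obtain ⟨w, hwI, hws, hw1⟩ := h1J
  -- w has central coefficients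
  have hcomm : ∀ (a : A) (i : ι), a * c w i = c w i * a := by
    intro a i
    have hyI : (1 ⊗ₜ[F] a) * w - w * (1 ⊗ₜ[F] a) ∈ I :=
      I.sub_mem (I.mul_mem_left _ _ hwI) (I.mul_mem_right _ _ hwI)
    have hcy : ∀ j, c ((1 ⊗ₜ[F] a) * w - w * (1 ⊗ₜ[F] a)) j = a * c w j - c w j * a := by
      intro j
      rw [map_sub, Finsupp.sub_apply, hc, Stmt13.Stmt13.cEquiv_mul_left, Stmt13.Stmt13.cEquiv_mul_right]
    have hy0 : (1 ⊗ₜ[F] a) * w - w * (1 ⊗ₜ[F] a) = 0 := by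
      by_contra hy
      have hle : (c ((1 ⊗ₜ[F] a) * w - w * (1 ⊗ₜ[F] a))).support
          ⊆ (c w).support.erase i₀ := by
        intro j hj
        rw [Finsupp.mem_support_iff, hcy] at hj
        rw [Finset.mem_erase, Finsupp.mem_support_iff]
        constructor
        · rintro rfl
          rw [hw1, mul_one, one_mul, sub_self] at hj
          exact hj rfl
        · intro h0
          rw [h0, mul_zero, zero_mul, sub_self] at hj
          exact hj rfl
      have hi₀w : i₀ ∈ (c w).support := Finsupp.mem_support_iff.2 (by rw [hw1]; exact one_ne_zero)
      have : (c ((1 ⊗ₜ[F] a) * w - w * (1 ⊗ₜ[F] a))).support.card < (c z).support.card :=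
        lt_of_le_of_lt (Finset.card_le_card hle)
          (lt_of_lt_of_le (Finset.card_erase_lt_of_mem hi₀w) (Finset.card_le_card hws))
      exact absurd (hmin _ hyI hy) (not_le.2 this)
    have := hcy i
    rw [hy0, map_zero, Finsupp.zero_apply] at this
    exact sub_eq_zero.1 this.symm
  -- coefficients are scalars
  have hscal : ∀ i : ι, ∃ d : F, algebraMap F A d = c w i := by
    intro i
    have : c w i ∈ Subalgebra.center F A := Subalgebra.mem_center_iff.2 fun a => hcomm a i
    rw [Algebra.IsCentral.center_eq_bot, Algebra.mem_bot] at this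
    exact this.imp fun d hd => hd
  choose d hd using hscal
  -- w = l ⊗ 1
  have hw : w = (((c w).support.sum fun i => d i • (Module.Basis.ofVectorSpace F L) i)) ⊗ₜ[F] (1 : A) := by
    conv_lhs => rw [Stmt13.Stmt13.cEquiv_reconstruct F L A w]
    rw [TensorProduct.sum_tmul, Finsupp.sum]
    refine Finset.sum_congr rfl fun i _ => ?_
    rw [← hc, ← hd i, Algebra.algebraMap_eq_smul_one, TensorProduct.smul_tmul]
  set l : L := (c w).support.sum fun i => d i • (Module.Basis.ofVectorSpace F L) i with hl
  have hw0 : w ≠ 0 := by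
    intro h
    rw [h, map_zero, Finsupp.zero_apply] at hw1
    exact one_ne_zero hw1.symm
  have hl0 : l ≠ 0 := by
    rintro h
    rw [hw, h, TensorProduct.zero_tmul] at hw0
    exact hw0 rfl
  have hone : (1 : L ⊗[F] A) ∈ I := by
    have : (l⁻¹ ⊗ₜ[F] (1 : A)) * w ∈ I := I.mul_mem_left _ _ hwI
    rw [hw] at this
    rwa [Algebra.TensorProduct.tmul_mul_tmul, inv_mul_cancel₀ hl0, one_mul,
      ← Algebra.TensorProduct.one_def] at this
  exact TwoSidedIdeal.eq_top I hone

end Simple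

section Dir1
variable (F L A : Type) [Field F] [Field L] [Algebra F L]
  [Ring A] [Algebra F A] [Nontrivial A] [FiniteDimensional F A] [FiniteDimensional F L]

theorem Stmt13.forward_dir (htens : IsSimpleRing (L ⊗[F] A)) (n : ℕ) (hn : 0 < n)
    (hA : Module.finrank F A = n * n) (hL : Module.finrank F L = n)
    (f : L →ₐ[F] A) :
    Nonempty (L ⊗[F] A ≃ₐ[L] Matrix (Fin n) (Fin n) L) := by
  letI : Module L A :=
    { smul := fun l x => x * f l
      one_smul := fun x => by show x * f 1 = x; simp
      mul_smul := fun l l' x => by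
        show x * f (l * l') = (x * f l') * f l
        have hfc : f l * f l' = f l' * f l := by rw [← map_mul, ← map_mul, mul_comm]
        rw [map_mul, hfc, ← mul_assoc]
      smul_zero := fun l => by show (0 : A) * f l = 0; rw [zero_mul]
      smul_add := fun l x y => by show (x + y) * f l = x * f l + y * f l; rw [add_mul]
      add_smul := fun l l' x => by show x * f (l + l') = x * f l + x * f l'; rw [map_add, mul_add]
      zero_smul := fun x => by show x * f 0 = 0; rw [map_zero, mul_zero] }
  have smul_def : ∀ (l : L) (x : A), l • x = x * f l := fun _ _ => rfl
  letI : IsScalarTower F L A := ⟨fun c l x => by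
    rw [smul_def, smul_def, map_smul, Algebra.smul_def, Algebra.smul_def,
      Algebra.commutes c (f l), ← mul_assoc, Algebra.commutes c (x * f l)]⟩
  letI : SMulCommClass L F A := ⟨fun l c x => by
    rw [smul_def, smul_def, Algebra.smul_def, Algebra.smul_def, mul_assoc]⟩
  letI : SMulCommClass L L A := ⟨fun l l' x => by
    rw [smul_def, smul_def, smul_def, smul_def, mul_assoc, mul_assoc,
      ← map_mul, mul_comm l' l, map_mul]⟩
  haveI : FiniteDimensional L A := FiniteDimensional.right F L A
  have hLA : Module.finrank L A = n := by
    have := Module.finrank_mul_finrank F L A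
    rw [hL, hA] at this
    exact Nat.eq_of_mul_eq_mul_left hn this
  let bA : Module.Basis (Fin n) L A := Module.finBasisOfFinrankEq L A hLA
  -- the F-algebra map A → End_L A by left multiplication
  let φA : A →ₐ[F] Module.End L A :=
    { toFun := fun a =>
        { toFun := fun x => a * x
          map_add' := fun x y => mul_add a x y
          map_smul' := fun l x => by
            simp only [RingHom.id_apply, smul_def]
            rw [mul_assoc] }
      map_one' := LinearMap.ext fun x => one_mul x
      map_mul' := fun a b => LinearMap.ext fun x => mul_assoc a b x
      map_zero' := LinearMap.ext fun x => zero_mul x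
      map_add' := fun a b => LinearMap.ext fun x => add_mul a b x
      commutes' := fun c => LinearMap.ext fun x => by
        show algebraMap F A c * x = algebraMap F (Module.End L A) c x
        rw [Module.algebraMap_end_apply, Algebra.smul_def] }
  letI : IsScalarTower F L (Module.End L A) := IsScalarTower.of_algebraMap_eq fun c => by
    ext x
    show c • x = (algebraMap F L c) • x
    rw [smul_def, AlgHom.commutes, Algebra.smul_def, ← Algebra.commutes c x]
  have hcomm : ∀ (l : L) (a : A),
      Commute ((Algebra.ofId L (Module.End L A)) l) (φA a) := by
    intro l a
    apply LinearMap.ext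
    intro x
    show ((Algebra.ofId L (Module.End L A)) l * φA a) x
        = (φA a * (Algebra.ofId L (Module.End L A)) l) x
    rw [Module.End.mul_apply, Module.End.mul_apply]
    show (algebraMap L (Module.End L A)) l (a * x) = φA a ((algebraMap L (Module.End L A)) l x)
    rw [Module.algebraMap_end_apply, Module.algebraMap_end_apply]
    show l • (a * x) = a * (l • x)
    rw [smul_def, smul_def, mul_assoc]
  let φ : L ⊗[F] A →ₐ[L] Module.End L A :=
    Algebra.TensorProduct.lift (Algebra.ofId L (Module.End L A)) φA hcomm
  haveI : Nontrivial (Module.End L A) :=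
    ⟨1, 0, fun h => one_ne_zero (congrFun (congrArg DFunLike.coe h) (1 : A))⟩
  have hinj : Function.Injective φ := φ.toRingHom.injective
  have hrank : Module.finrank L (L ⊗[F] A) = Module.finrank L (Module.End L A) := by
    rw [Module.finrank_baseChange, Module.finrank_linearMap, hA, hLA]
  have hsurj : Function.Surjective φ :=
    (LinearMap.injective_iff_surjective_of_finrank_eq_finrank hrank).1 hinj
  exact ⟨(AlgEquiv.ofBijective φ ⟨hinj, hsurj⟩).trans (algEquivMatrix bA)⟩

end Dir1


section SS
variable {A : Type} [Ring A] [IsSimpleRing A]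

omit [IsSimpleRing A] in
/-- image of a simple submodule under a linear map is `⊥` or isomorphic copy -/
lemma Stmt13.map_simple_aux {M N : Type} [AddCommGroup M] [Module A M] [AddCommGroup N] [Module A N]
    (f : M →ₗ[A] N) (P : Submodule A M) (hP : IsSimpleModule A P) :
    Submodule.map f P = ⊥ ∨ Nonempty (P ≃ₗ[A] Submodule.map f P) := by
  let g := f.comp P.subtype
  have hr : LinearMap.range g = P.map f := by
    rw [LinearMap.range_comp, Submodule.range_subtype]
  by_cases hg : g = 0
  · left; rw [← hr, hg, LinearMap.range_zero]
  · right
    haveI := hP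
    exact ⟨(LinearEquiv.ofInjective g (LinearMap.injective_of_ne_zero hg)).trans
      (LinearEquiv.ofEq _ _ hr)⟩

/-- a set of submodules of a simple ring closed under right multiplication has `sSup = ⊤`
provided it contains a nonzero member. -/
lemma Stmt13.sSup_eq_top_of_closed (S : Set (Submodule A A))
    (hclosed : ∀ (r : A), ∀ P ∈ S, Submodule.map (LinearMap.toSpanSingleton A A r) P ∈ S)
    (hne : ∃ P ∈ S, P ≠ ⊥) : sSup S = ⊤ := by
  obtain ⟨P₀, hP₀S, hP₀⟩ := hne
  obtain ⟨x, hxP₀, hx0⟩ := Submodule.exists_mem_ne_zero_of_ne_bot hP₀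
  have hmapsup : ∀ r : A, Submodule.map (LinearMap.toSpanSingleton A A r) (sSup S) ≤ sSup S := by
    intro r
    calc Submodule.map (LinearMap.toSpanSingleton A A r) (sSup S)
        = ⨆ P : S, Submodule.map (LinearMap.toSpanSingleton A A r) (P : Submodule A A) := by
          rw [sSup_eq_iSup' S, Submodule.map_iSup]
      _ ≤ sSup S := iSup_le fun P => le_sSup (hclosed r P P.2)
  let I : TwoSidedIdeal A := TwoSidedIdeal.mk' ((sSup S : Submodule A A) : Set A)
    (Submodule.zero_mem _)
    (fun h1 h2 => Submodule.add_mem _ h1 h2)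
    (fun h => Submodule.neg_mem _ h)
    (fun {u y} h => by simpa [smul_eq_mul] using Submodule.smul_mem _ u h)
    (fun {y r} h => by
      have : y * r = LinearMap.toSpanSingleton A A r y := by
        simp [LinearMap.toSpanSingleton_apply, smul_eq_mul]
      rw [this]
      exact hmapsup r (Submodule.mem_map_of_mem h))
  have hxI : x ∈ I := by
    rw [TwoSidedIdeal.mem_mk']
    exact le_sSup hP₀S hxP₀
  have h1 : (1 : A) ∈ I := IsSimpleRing.one_mem_of_ne_zero_mem I hx0 hxI
  rw [TwoSidedIdeal.mem_mk'] at h1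
  rw [Submodule.eq_top_iff']
  intro y
  simpa [smul_eq_mul] using Submodule.smul_mem (sSup S) y h1

/-- a simple artinian ring is semisimple -/
lemma Stmt13.isSemisimpleRing_of_artinian [IsArtinian A A] : IsSemisimpleRing A := by
  apply IsSemisimpleModule.of_sSup_simples_eq_top
  have hclosed : ∀ (r : A), ∀ P ∈ { m : Submodule A A | IsSimpleModule A m } ∪ {⊥},
      Submodule.map (LinearMap.toSpanSingleton A A r) P
        ∈ { m : Submodule A A | IsSimpleModule A m } ∪ {⊥} := by
    rintro r P (hP | hP)
    · rcases Stmt13.map_simple_aux (LinearMap.toSpanSingleton A A r) P hP with h | ⟨⟨e⟩⟩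
      · right; simp [h]
      · left
        haveI : IsSimpleModule A P := hP
        exact IsSimpleModule.congr e.symm
    · right; simp only [Set.mem_singleton_iff] at hP; simp [hP]
  haveI : Nontrivial A := inferInstance
  haveI : IsAtomic (Submodule A A) := inferInstance
  obtain ⟨m, hm⟩ : ∃ m : Submodule A A, IsAtom m := IsAtomic.exists_atom _
  have htop := Stmt13.sSup_eq_top_of_closed _ hclosed
    ⟨m, Or.inl (isSimpleModule_iff_isAtom.2 hm), hm.1⟩
  rw [Set.union_comm, sSup_union, sSup_singleton, bot_sup_eq] at htop
  exact htop

end SS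

section X
variable {A : Type} [Ring A] [IsSimpleRing A] [IsSemisimpleRing A]

/-- over a simple (semisimple) ring all simple modules are isomorphic to a fixed
simple submodule of `A` -/
lemma Stmt13.simple_iso (N : Submodule A A) (hN : IsSimpleModule A N)
    (T : Type) [AddCommGroup T] [Module A T] (hT : IsSimpleModule A T) :
    Nonempty ((N : Submodule A A) ≃ₗ[A] T) := by
  classical
  set S : Set (Submodule A A) :=
    {P | P = ⊥ ∨ (IsSimpleModule A P ∧ Nonempty ((P : Submodule A A) ≃ₗ[A] N))} with hS
  have hclosed : ∀ (r : A), ∀ P ∈ S,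
      Submodule.map (LinearMap.toSpanSingleton A A r) P ∈ S := by
    rintro r P (rfl | ⟨hP, ⟨e⟩⟩)
    · left; simp
    · rcases Stmt13.map_simple_aux (LinearMap.toSpanSingleton A A r) P hP with h | ⟨⟨e'⟩⟩
      · left; exact h
      · right
        haveI : IsSimpleModule A P := hP
        exact ⟨IsSimpleModule.congr e'.symm, ⟨e'.symm.trans e⟩⟩
  have hNne : (N : Submodule A A) ≠ ⊥ := by
    haveI := hN
    intro h
    have : Nontrivial N := IsSimpleModule.nontrivial A N
    rw [h] at this
    obtain ⟨⟨a, ha⟩, ⟨b, hb⟩, hab⟩ := this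
    simp only [Submodule.mem_bot] at ha hb
    exact hab (by subst ha; subst hb; rfl)
  have htop : sSup S = ⊤ := Stmt13.sSup_eq_top_of_closed S hclosed
    ⟨N, Or.inr ⟨hN, ⟨LinearEquiv.refl _ _⟩⟩, hNne⟩
  -- now map onto T
  haveI := hT
  haveI : Nontrivial T := IsSimpleModule.nontrivial A T
  obtain ⟨t, ht0⟩ := exists_ne (0 : T)
  have hsurj := IsSimpleModule.toSpanSingleton_surjective A (M := T) ht0
  set φ := LinearMap.toSpanSingleton A T t with hφ
  have hmaptop : (⨆ P : S, Submodule.map φ (P : Submodule A A)) = ⊤ := by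
    rw [← Submodule.map_iSup, ← sSup_eq_iSup' S, htop, Submodule.map_top,
      LinearMap.range_eq_top.2 hsurj]
  have hex : ∃ P : S, Submodule.map φ (P : Submodule A A) ≠ ⊥ := by
    by_contra h
    push_neg at h
    rw [iSup_congr h] at hmaptop
    simp only [iSup_bot] at hmaptop
    exact bot_ne_top hmaptop
  obtain ⟨⟨P, hPS⟩, hPmap⟩ := hex
  have hPne : P ≠ ⊥ := by rintro rfl; simp at hPmap
  obtain ⟨hPsimple, ⟨e⟩⟩ : IsSimpleModule A P ∧ Nonempty ((P : Submodule A A) ≃ₗ[A] N) :=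
    hPS.resolve_left hPne
  haveI := hPsimple
  set g := φ.comp P.subtype with hg
  have hgr : LinearMap.range g = Submodule.map φ P := by
    rw [hg, LinearMap.range_comp, Submodule.range_subtype]
  have hgne : g ≠ 0 := by
    intro h
    rw [h, LinearMap.range_zero] at hgr
    exact hPmap hgr.symm
  have hbij := LinearMap.bijective_of_ne_zero hgne
  exact ⟨e.symm.trans (LinearEquiv.ofBijective g hbij)⟩

end X

section Y
variable (F : Type) [Field F] {A : Type} [Ring A] [Algebra F A]
variable (N₀ : Type) [AddCommGroup N₀] [Module A N₀]

/-- `Fin.cons` as a linear equivalence -/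
def Stmt13.finConsLEquiv (k : ℕ) : (N₀ × (Fin k → N₀)) ≃ₗ[A] (Fin (k + 1) → N₀) where
  toFun p := Fin.cons p.1 p.2
  invFun q := (q 0, fun i => q i.succ)
  map_add' p q := by
    funext i
    refine Fin.cases ?_ (fun j => ?_) i <;> simp
  map_smul' c p := by
    funext i
    refine Fin.cases ?_ (fun j => ?_) i <;> simp
  left_inv p := by simp
  right_inv q := by
    funext i
    refine Fin.cases ?_ (fun j => ?_) i <;> simp

lemma Stmt13.iso_pow_aux (m : ℕ) :
    ∀ (V : Type) [AddCommGroup V] [Module A V] [Module F V] [IsScalarTower F A V]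
      [FiniteDimensional F V] [IsSemisimpleModule A V],
      (∀ (W : Submodule A V), IsSimpleModule A W → Nonempty ((W : Submodule A V) ≃ₗ[A] N₀)) →
      Module.finrank F V = m → ∃ k, Nonempty (V ≃ₗ[A] (Fin k → N₀)) := by
  induction m using Nat.strong_induction_on with
  | _ m ih =>
    intro V _ _ _ _ _ _ huniq hm
    by_cases hV : Subsingleton V
    · exact ⟨0, ⟨LinearEquiv.ofSubsingleton V _⟩⟩
    haveI : Nontrivial V := not_subsingleton_iff_nontrivial.1 hV
    obtain ⟨W, hW⟩ := IsSemisimpleModule.exists_simple_submodule A V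
    obtain ⟨C, hC⟩ := exists_isCompl W
    haveI : IsSimpleModule A W := hW
    -- C is a proper submodule
    have hWne : W ≠ ⊥ := by
      intro h
      have : Nontrivial W := IsSimpleModule.nontrivial A W
      rw [h] at this
      obtain ⟨⟨a, ha⟩, ⟨b, hb⟩, hab⟩ := this
      simp only [Submodule.mem_bot] at ha hb
      exact hab (by subst ha; subst hb; rfl)
    have hCne : C ≠ ⊤ := by
      rintro rfl
      exact hWne (hC.disjoint.eq_bot_of_le le_top)
    haveI : FiniteDimensional F ↥C :=
      inferInstanceAs (FiniteDimensional F ↥(C.restrictScalars F))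
    have hCrank : Module.finrank F ↥C < m := by
      have h1 : Module.finrank F ↥C = Module.finrank F ↥(C.restrictScalars F) := rfl
      have h2 : C.restrictScalars F < ⊤ := by
        rw [lt_top_iff_ne_top]
        intro h
        exact hCne (Submodule.restrictScalars_injective F _ _ (by rw [h]; rfl))
      rw [← hm, h1]
      exact Submodule.finrank_lt h2.ne
    obtain ⟨k, ⟨eC⟩⟩ := ih _ hCrank ↥C
      (fun W' hW' => by
        rcases Stmt13.map_simple_aux C.subtype W' hW' with h | ⟨⟨e'⟩⟩
        · exfalso
          haveI := hW'
          have : Nontrivial W' := IsSimpleModule.nontrivial A W'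
          obtain ⟨⟨a, ha⟩, ⟨b, hb⟩, hab⟩ := this
          have hinj : Function.Injective C.subtype := Subtype.coe_injective
          have : Submodule.map C.subtype W' = ⊥ → W' = ⊥ := by
            intro hh
            rw [← Submodule.map_bot C.subtype] at hh
            exact Submodule.map_injective_of_injective hinj hh
          have hW'bot := this h
          rw [hW'bot] at ha hb
          simp only [Submodule.mem_bot] at ha hb
          exact hab (by subst ha; subst hb; rfl)
        · haveI := hW'
          haveI : IsSimpleModule A (Submodule.map C.subtype W') := IsSimpleModule.congr e'.symm
          obtain ⟨e''⟩ := huniq (Submodule.map C.subtype W') inferInstance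
          exact ⟨e'.trans e''⟩)
      rfl
    obtain ⟨eW⟩ := huniq W hW
    refine ⟨k + 1, ⟨?_⟩⟩
    exact ((Submodule.prodEquivOfIsCompl W C hC).symm.trans
      (eW.prodCongr eC)).trans (Stmt13.finConsLEquiv N₀ k)

end Y

section Dir2

theorem Stmt13.backward_dir (F A L : Type) [Field F] [Ring A] [Algebra F A]
    [IsSimpleRing A] [FiniteDimensional F A]
    [Field L] [Algebra F L] [FiniteDimensional F L]
    (n : ℕ) (hn : 0 < n)
    (hA : Module.finrank F A = n * n)
    (hL : Module.finrank F L = n)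
    (e : L ⊗[F] A ≃ₐ[L] Matrix (Fin n) (Fin n) L) :
    ∃ f : L →ₐ[F] A, Function.Injective f := by
  classical
  set M := (Fin n → L) with hM
  -- A acts on M through e
  let ψ : L ⊗[F] A ≃ₐ[L] Module.End L M :=
    e.trans (algEquivMatrix (Pi.basisFun L (Fin n))).symm
  let Θ : A →ₐ[F] Module.End L M :=
    (ψ.toAlgHom.restrictScalars F).comp (Algebra.TensorProduct.includeRight)
  letI : Module A M := Module.compHom M Θ.toRingHom
  have smulA_def : ∀ (a : A) (m : M), a • m = Θ a m := fun _ _ => rfl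
  letI : IsScalarTower F A M := ⟨fun c a m => by
    rw [smulA_def, smulA_def, map_smul, LinearMap.smul_apply]⟩
  have hLAcomm : ∀ (a : A) (l : L) (m : M), a • (l • m) = l • (a • m) := by
    intro a l m
    rw [smulA_def, smulA_def, (Θ a).map_smul]
  -- A is semisimple
  haveI : IsArtinian A A := isArtinian_of_tower F inferInstance
  haveI : IsSemisimpleRing A := Stmt13.isSemisimpleRing_of_artinian
  -- fixed simple module
  obtain ⟨N₀, hN₀⟩ := IsSemisimpleModule.exists_simple_submodule A A
  haveI : FiniteDimensional F ↥N₀ :=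
    inferInstanceAs (FiniteDimensional F ↥(N₀.restrictScalars F))
  haveI : IsSimpleModule A ↥N₀ := hN₀
  haveI : Nontrivial ↥N₀ := IsSimpleModule.nontrivial A ↥N₀
  have hd : 0 < Module.finrank F ↥N₀ := Module.finrank_pos
  -- decompose A and M
  obtain ⟨k₁, ⟨e₁⟩⟩ := Stmt13.iso_pow_aux F ↥N₀ (Module.finrank F A) A
    (fun W hW => (Stmt13.simple_iso N₀ hN₀ ↥W hW).map fun e => e.symm) rfl
  obtain ⟨k₂, ⟨e₂⟩⟩ := Stmt13.iso_pow_aux F ↥N₀ (Module.finrank F M) M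
    (fun W hW => (Stmt13.simple_iso N₀ hN₀ ↥W hW).map fun e => e.symm) rfl
  -- count dimensions
  have hcount : ∀ (k : ℕ), Module.finrank F (Fin k → ↥N₀) = k * Module.finrank F ↥N₀ := by
    intro k
    rw [Module.finrank_pi_fintype F, Finset.sum_const, Finset.card_univ, Fintype.card_fin,
      smul_eq_mul]
  have hrA : Module.finrank F A = k₁ * Module.finrank F ↥N₀ := by
    rw [← hcount k₁]
    exact LinearEquiv.finrank_eq (e₁.restrictScalars F)
  have hrM : Module.finrank F M = k₂ * Module.finrank F ↥N₀ := by
    rw [← hcount k₂]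
    exact LinearEquiv.finrank_eq (e₂.restrictScalars F)
  have hMdim : Module.finrank F M = n * n := by
    have h1 := Module.finrank_mul_finrank F L M
    have h2 : Module.finrank L M = n := Module.finrank_fin_fun L
    rw [hL, h2] at h1
    exact h1.symm
  have hk : k₁ = k₂ := by
    apply Nat.eq_of_mul_eq_mul_right hd
    rw [← hrA, ← hrM, hA, hMdim]
  subst hk
  -- the A-module isomorphism
  let g : A ≃ₗ[A] M := e₁.trans e₂.symm
  have hg_apply : ∀ x : A, g x = x • g 1 := by
    intro x
    conv_lhs => rw [show x = x • (1 : A) by rw [smul_eq_mul, mul_one]]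
    rw [map_smul]
  -- construct the embedding
  have key : ∀ l l' : L, g.symm ((l * l') • g 1) = g.symm (l • g 1) * g.symm (l' • g 1) := by
    intro l l'
    set x₁ := g.symm (l • g 1) with hx₁def
    set x₂ := g.symm (l' • g 1) with hx₂def
    have hx₁ : g x₁ = l • g 1 := g.apply_symm_apply _
    have hx₂ : g x₂ = l' • g 1 := g.apply_symm_apply _
    apply g.injective
    rw [g.apply_symm_apply]
    calc (l * l') • g 1 = l' • (l • g 1) := by rw [smul_smul, mul_comm]
      _ = l' • (x₁ • g 1) := by rw [← hx₁, hg_apply x₁]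
      _ = x₁ • (l' • g 1) := (hLAcomm x₁ l' (g 1)).symm
      _ = x₁ • (x₂ • g 1) := by rw [← hx₂, hg_apply x₂]
      _ = (x₁ * x₂) • g 1 := (mul_smul x₁ x₂ (g 1)).symm
      _ = g (x₁ * x₂) := (hg_apply _).symm
  have keyc : ∀ c : F, g.symm ((algebraMap F L c) • g 1) = algebraMap F A c := by
    intro c
    apply g.injective
    rw [g.apply_symm_apply]
    calc (algebraMap F L c) • g 1 = c • g 1 := algebraMap_smul L c (g 1)
      _ = (algebraMap F A c) • g 1 := (algebraMap_smul A c (g 1)).symm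
      _ = g (algebraMap F A c) := (hg_apply _).symm
  let myf : L →ₐ[F] A :=
    { toFun := fun l => g.symm (l • g 1)
      map_one' := by
        show g.symm ((1 : L) • g 1) = 1
        rw [one_smul]; exact g.symm_apply_apply 1
      map_mul' := fun l l' => key l l'
      map_zero' := by
        show g.symm ((0 : L) • g 1) = 0
        rw [zero_smul, map_zero]
      map_add' := fun l l' => by
        show g.symm ((l + l') • g 1) = g.symm (l • g 1) + g.symm (l' • g 1)
        rw [add_smul, map_add]
      commutes' := fun c => keyc c }
  haveI : Nontrivial A := inferInstance
  exact ⟨myf, fun x y h => RingHom.injective (myf : L →+* A) h⟩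

end Dir2



theorem outer_forms_stmt13
    (F A L : Type) [Field F] [Ring A] [Algebra F A]
    [Algebra.IsCentral F A] [IsSimpleRing A] [FiniteDimensional F A]
    [Field L] [Algebra F L] [FiniteDimensional F L] [Algebra.IsSeparable F L]
    (n : ℕ) (hn : 0 < n)
    (hA : Module.finrank F A = n * n)
    (hL : Module.finrank F L = n) :
    (∃ f : L →ₐ[F] A, Function.Injective f) ↔
      Nonempty (L ⊗[F] A ≃ₐ[L] Matrix (Fin n) (Fin n) L) := by
  constructor
  · rintro ⟨f, -⟩
    exact Stmt13.forward_dir F L A (Stmt13.tensor_isSimpleRing F L A) n hn hA hL f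
  · rintro ⟨e⟩
    exact Stmt13.backward_dir F A L n hn hA hL e
end

section
/- Let F be a field and L'/F any field extension of degree 3. If E/F is a field extension such that the algebraic closure of F in E has degree at most 2 over F, then E and L' are linearly disjoint over F. -/
/-
STATEMENT 18: Let F be a field and L'/F any field extension of degree 3.  If E/F
is a field extension such that the algebraic closure of F in E has degree at most
2 over F, then E and L' are linearly disjoint over F, i.e. E ⊗_F L' is a field.
-/

open scoped TensorProduct
open IntermediateField

theorem outer_forms_stmt18
    (F E L' : Type) [Field F] [Field E] [Algebra F E] [Field L'] [Algebra F L']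
    (hL : Module.finrank F L' = 3)
    (hfin : FiniteDimensional F (integralClosure F E))
    (hdeg : Module.finrank F (integralClosure F E) ≤ 2) :
    IsField (E ⊗[F] L') := by
  have hfinL : FiniteDimensional F L' := Module.finite_of_finrank_pos (by omega)
  -- find a primitive element x
  obtain ⟨x, hx⟩ : ∃ x : L', x ∉ (⊥ : IntermediateField F L') := by
    by_contra h
    push_neg at h
    have hbt : (⊥ : IntermediateField F L') = ⊤ := top_le_iff.mp fun y _ => h y
    have := IntermediateField.finrank_bot (F := F) (E := L')
    rw [hbt, IntermediateField.finrank_top'] at this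
    omega
  have hxint : IsIntegral F x := IsIntegral.of_finite F x
  have hmul : Module.finrank F F⟮x⟯ * Module.finrank F⟮x⟯ L' = 3 := by
    rw [Module.finrank_mul_finrank, hL]
  have h1 : Module.finrank F F⟮x⟯ ≠ 1 := fun h1eq => hx
    (IntermediateField.adjoin_simple_eq_bot_iff.mp (IntermediateField.finrank_eq_one_iff.mp h1eq))
  have hK : Module.finrank F F⟮x⟯ = 3 := by
    have hdvd : Module.finrank F F⟮x⟯ ∣ 3 := ⟨_, hmul.symm⟩
    rcases (Nat.prime_three).eq_one_or_self_of_dvd _ hdvd with h | h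
    · exact absurd h h1
    · exact h
  have hKL : Module.finrank F⟮x⟯ L' = 1 := by
    rw [hK] at hmul; omega
  have htop : F⟮x⟯ = ⊤ := by
    refine IntermediateField.eq_of_le_of_finrank_eq' le_top ?_
    rw [hKL, IntermediateField.finrank_top]
  set p : Polynomial F := minpoly F x with hp
  have hpmonic : p.Monic := minpoly.monic hxint
  have hpdeg : p.natDegree = 3 := by
    rw [← IntermediateField.adjoin.finrank hxint] at *
    exact hK
  set q : Polynomial E := p.map (algebraMap F E) with hq
  have hqdeg : q.natDegree = 3 := by rw [hq, Polynomial.natDegree_map]; exact hpdeg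
  have hq0 : q ≠ 0 := by
    intro h0
    rw [h0, Polynomial.natDegree_zero] at hqdeg; omega
  -- q is irreducible over E
  have hirr : Irreducible q := by
    rw [Polynomial.irreducible_iff_roots_eq_zero_of_degree_le_three (by omega) (by omega)]
    by_contra hroots
    obtain ⟨y, hy⟩ := Multiset.exists_mem_of_ne_zero hroots
    have hyroot : Polynomial.aeval y p = 0 := by
      have hmem := (Polynomial.mem_roots hq0).mp hy
      rw [Polynomial.aeval_def, ← Polynomial.eval_map]
      exact hmem
    have hyint : IsIntegral F y := ⟨p, hpmonic, by rwa [← Polynomial.aeval_def]⟩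
    have hmin : p = minpoly F y :=
      minpoly.eq_of_irreducible_of_monic (minpoly.irreducible hxint) hyroot hpmonic
    -- y lies in the integral closure, contradiction with finrank ≤ 2
    haveI : FiniteDimensional F (IntermediateField.adjoin F ({y} : Set E)) :=
      IntermediateField.adjoin.finiteDimensional hyint
    have h3 : Module.finrank F (IntermediateField.adjoin F ({y} : Set E)) = 3 := by
      rw [IntermediateField.adjoin.finrank hyint, ← hmin, hpdeg]
    have hsub : Subalgebra.toSubmodule (IntermediateField.adjoin F ({y} : Set E)).toSubalgebra ≤
        Subalgebra.toSubmodule (integralClosure F E) := by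
      rw [IntermediateField.adjoin_simple_toSubalgebra_of_isAlgebraic hyint.isAlgebraic]
      intro z hz
      exact Algebra.adjoin_le_iff.mpr (Set.singleton_subset_iff.mpr hyint) hz
    haveI : Module.Finite F (Subalgebra.toSubmodule (integralClosure F E)) := hfin
    have hle := Submodule.finrank_mono (R := F)
      (t := Subalgebra.toSubmodule (integralClosure F E)) hsub
    have hle' : Module.finrank F (IntermediateField.adjoin F ({y} : Set E)) ≤
        Module.finrank F (integralClosure F E) := hle
    rw [h3] at hle'
    omega
  haveI : Fact (Irreducible q) := ⟨hirr⟩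
  -- the equivalence L' ≃ AdjoinRoot p
  let e : AdjoinRoot p ≃ₐ[F] L' :=
    (IntermediateField.adjoinRootEquivAdjoin F hxint).trans
      ((IntermediateField.equivOfEq htop).trans IntermediateField.topEquiv)
  have h0 : Polynomial.aeval (AdjoinRoot.root q) p = 0 := by
    rw [← Polynomial.aeval_map_algebraMap E, ← hq, Polynomial.aeval_def,
      AdjoinRoot.algebraMap_eq]
    exact AdjoinRoot.eval₂_root q
  let ψ : L' →ₐ[F] AdjoinRoot q :=
    (AdjoinRoot.liftAlgHom p (Algebra.ofId F (AdjoinRoot q)) (AdjoinRoot.root q) h0).comp e.symm.toAlgHom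
  let φ : E ⊗[F] L' →ₐ[E] AdjoinRoot q :=
    Algebra.TensorProduct.lift (Algebra.ofId E (AdjoinRoot q)) ψ (fun _ _ => Commute.all _ _)
  have hsurj : Function.Surjective φ := by
    rw [← AlgHom.range_eq_top, eq_top_iff, ← AdjoinRoot.adjoinRoot_eq_top (f := q),
      Algebra.adjoin_le_iff, Set.singleton_subset_iff]
    have key : φ (1 ⊗ₜ e (AdjoinRoot.root p)) = AdjoinRoot.root q := by
      simp only [φ, Algebra.TensorProduct.lift_tmul, map_one, one_mul, ψ, AlgHom.comp_apply,
        AlgEquiv.toAlgHom_eq_coe, AlgHom.coe_coe, AlgEquiv.symm_apply_apply]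
      exact (congrArg (AdjoinRoot.liftAlgHom p (Algebra.ofId F (AdjoinRoot q)) (AdjoinRoot.root q) h0)
        (e.symm_apply_apply _)).trans (AdjoinRoot.liftAlgHom_root _ _ _ h0)
    exact ⟨1 ⊗ₜ e (AdjoinRoot.root p), key⟩
  have hrank : Module.finrank E (E ⊗[F] L') = Module.finrank E (AdjoinRoot q) := by
    rw [Module.finrank_baseChange, hL, (AdjoinRoot.powerBasis hq0).finrank]
    simp [AdjoinRoot.powerBasis, hqdeg]
  haveI : FiniteDimensional E (AdjoinRoot q) := (AdjoinRoot.powerBasis hq0).finite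
  have hinj : Function.Injective φ :=
    (LinearMap.injective_iff_surjective_of_finrank_eq_finrank hrank).mpr hsurj
  exact (RingEquiv.ofBijective (φ : E ⊗[F] L' →+* AdjoinRoot q)
    ⟨hinj, hsurj⟩).toMulEquiv.isField (Field.toIsField (AdjoinRoot q))
end
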